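/- Let ξ be a standard normal random variable. Then for every a ∈ ℝ and all 0 ≤ β ≤ α, |E[(a + √α·ξ)⁺ − (a + √β·ξ)⁺]| ≤ √(2/π) (√α − √β), where x⁺ = max(x, 0). -/

import Mathlib

open MeasureTheory ProbabilityTheory Real Set Filter

lemma aux_Ioi : ∫ x in Set.Ioi (0:ℝ), x * Real.exp (-(1/2) * x ^ 2) = 1 := by
  have A : ∀ x : ℝ, HasDerivAt (fun x : ℝ => -Real.exp (-(1/2) * x ^ 2))
      (x * Real.exp (-(1/2) * x ^ 2)) x := by
    intro x
    refine (((hasDerivAt_pow 2 x).const_mul (-(1/2 : ℝ))).exp).fun_neg.congr_deriv ?_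
    push_cast; ring
  have B : Filter.Tendsto (fun y : ℝ => -Real.exp (-(1/2) * y ^ 2)) Filter.atTop (nhds 0) := by
    rw [show (0:ℝ) = -0 by ring]
    refine Filter.Tendsto.neg ?_
    refine Real.tendsto_exp_atBot.comp ?_
    exact (tendsto_pow_atTop two_ne_zero).const_mul_atTop_of_neg (by norm_num)
  have := integral_Ioi_of_hasDerivAt_of_tendsto' (a := (0:ℝ)) (f := fun x : ℝ => -Real.exp (-(1/2) * x ^ 2))
    (fun x _ => A x) ((integrable_mul_exp_neg_mul_sq (by norm_num : (0:ℝ) < 1/2)).integrableOn) B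
  simpa using this

lemma aux_pdf (x : ℝ) : gaussianPDFReal 0 1 x = (Real.sqrt (2 * π))⁻¹ * Real.exp (-(1/2) * x ^ 2) := by
  rw [gaussianPDFReal_def]
  push_cast
  norm_num
  ring_nf
  exact Or.inl trivial

lemma aux_int_abs : Integrable (fun x : ℝ => |x| * Real.exp (-(1/2) * x ^ 2)) := by
  have := (integrable_mul_exp_neg_mul_sq (by norm_num : (0:ℝ) < 1/2)).abs
  refine this.congr (Filter.Eventually.of_forall fun x => ?_)
  simp [abs_mul, abs_of_nonneg (Real.exp_nonneg _)]

lemma aux_dens : gaussianReal 0 1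
    = volume.withDensity (fun x => ((gaussianPDFReal 0 1 x).toNNReal : ENNReal)) := by
  rw [gaussianReal_of_var_ne_zero 0 one_ne_zero]
  rfl

lemma aux_meas_nn : Measurable (fun x => (gaussianPDFReal 0 1 x).toNNReal) :=
  (measurable_gaussianPDFReal 0 1).real_toNNReal

lemma aux_smul_eq : (fun x : ℝ => (gaussianPDFReal 0 1 x).toNNReal • |x|)
    = fun x => (Real.sqrt (2 * π))⁻¹ * (|x| * Real.exp (-(1/2) * x ^ 2)) := by
  ext x
  rw [NNReal.smul_def, smul_eq_mul, Real.coe_toNNReal _ (gaussianPDFReal_nonneg 0 1 x), aux_pdf]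
  ring

lemma aux_gauss_integrable : Integrable (fun x : ℝ => |x|) (gaussianReal 0 1) := by
  rw [aux_dens, integrable_withDensity_iff_integrable_smul aux_meas_nn]
  rw [aux_smul_eq]
  exact aux_int_abs.const_mul _

lemma aux_gauss_abs : ∫ x, |x| ∂(gaussianReal 0 1) = Real.sqrt (2 / π) := by
  rw [aux_dens, integral_withDensity_eq_integral_smul aux_meas_nn, aux_smul_eq,
    integral_const_mul]
  have habs : ∫ x : ℝ, |x| * Real.exp (-(1/2) * x ^ 2)
      = 2 * ∫ x in Set.Ioi (0:ℝ), x * Real.exp (-(1/2) * x ^ 2) := by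
    rw [← integral_comp_abs (f := fun x => x * Real.exp (-(1/2) * x ^ 2))]
    congr 1 with x
    rw [sq_abs]
  rw [habs, aux_Ioi, mul_one]
  rw [show (2:ℝ)/π = 2^2/(2*π) by ring, Real.sqrt_div (by norm_num),
    Real.sqrt_sq (by norm_num : (0:ℝ) ≤ 2)]
  rw [div_eq_mul_inv, mul_comm]

theorem stmt16 {Ω : Type*} [MeasurableSpace Ω] (P : Measure Ω) [IsProbabilityMeasure P]
    (ξ : Ω → ℝ) (hξmeas : Measurable ξ) (hξ : Measure.map ξ P = gaussianReal 0 1)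
    (a α β : ℝ) (hβ : 0 ≤ β) (hβα : β ≤ α) :
    |∫ ω, (max (a + Real.sqrt α * ξ ω) 0 - max (a + Real.sqrt β * ξ ω) 0) ∂P|
      ≤ Real.sqrt (2 / Real.pi) * (Real.sqrt α - Real.sqrt β) := by
  set c := Real.sqrt α - Real.sqrt β with hc
  have hc0 : 0 ≤ c := sub_nonneg.2 (Real.sqrt_le_sqrt hβα)
  have hintξ : Integrable (fun ω => |ξ ω|) P := by
    have : Integrable (fun x : ℝ => |x|) (Measure.map ξ P) := hξ ▸ aux_gauss_integrable
    exact (integrable_map_measure (Measurable.aestronglyMeasurable (by measurability))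
      hξmeas.aemeasurable).mp this
  have hintg : Integrable (fun ω => c * |ξ ω|) P := hintξ.const_mul c
  have hbound : ∀ ω, |max (a + Real.sqrt α * ξ ω) 0 - max (a + Real.sqrt β * ξ ω) 0|
      ≤ c * |ξ ω| := by
    intro ω
    calc |max (a + Real.sqrt α * ξ ω) 0 - max (a + Real.sqrt β * ξ ω) 0|
        ≤ |(a + Real.sqrt α * ξ ω) - (a + Real.sqrt β * ξ ω)| :=
          abs_max_sub_max_le_abs _ _ _
      _ = c * |ξ ω| := by
          rw [show (a + Real.sqrt α * ξ ω) - (a + Real.sqrt β * ξ ω) = c * ξ ω by ring,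
            abs_mul, abs_of_nonneg hc0]
  calc |∫ ω, (max (a + Real.sqrt α * ξ ω) 0 - max (a + Real.sqrt β * ξ ω) 0) ∂P|
      ≤ ∫ ω, |max (a + Real.sqrt α * ξ ω) 0 - max (a + Real.sqrt β * ξ ω) 0| ∂P :=
        by simpa [Real.norm_eq_abs] using
          norm_integral_le_integral_norm (μ := P)
            (fun ω => max (a + Real.sqrt α * ξ ω) 0 - max (a + Real.sqrt β * ξ ω) 0)
    _ ≤ ∫ ω, c * |ξ ω| ∂P :=
        integral_mono_of_nonneg (Filter.Eventually.of_forall fun ω => abs_nonneg _) hintg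
          (Filter.Eventually.of_forall hbound)
    _ = c * ∫ ω, |ξ ω| ∂P := integral_const_mul _ _
    _ = c * Real.sqrt (2 / π) := by
        congr 1
        rw [← integral_map hξmeas.aemeasurable (Measurable.aestronglyMeasurable (by measurability)),
          hξ, aux_gauss_abs]
    _ = Real.sqrt (2 / Real.pi) * c := mul_comm _ _
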